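/- In the i.i.d. minimax observation model with n units and expected number of treated units E[n_1] = nπ, the minimax root mean square error for estimating the population average treatment effect ψ = E[Y(1) − Y(0)] satisfies inf over estimators, sup over distributions, of √(E[(ψ̂ − ψ)²]) ≥ 1/√(72 nπ). -/

import Mathlib

open MeasureTheory Finset

/-- observation weight for one coordinate: `zi` = treated?, `yi` = observed outcome (0/1). -/
def gw (p : ℝ) (zi yi : Bool) : ℝ :=
  if zi then (if yi then p else 1 - p) else (if yi then 0 else 1)

lemma gw_nonneg {p : ℝ} (h0 : 0 ≤ p) (h1 : p ≤ 1) (zi yi : Bool) : 0 ≤ gw p zi yi := by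
  cases zi <;> cases yi <;> simp [gw] <;> linarith

lemma sum_pi_prod {n : ℕ} (h : Bool → Bool → ℝ) (z : Fin n → Bool) :
    ∑ y : Fin n → Bool, ∏ i, h (z i) (y i) = ∏ i, (h (z i) true + h (z i) false) := by
  classical
  calc ∑ y : Fin n → Bool, ∏ i, h (z i) (y i)
      = ∑ y ∈ Fintype.piFinset (fun _ : Fin n => (Finset.univ : Finset Bool)),
          ∏ i, h (z i) (y i) := by rw [Fintype.piFinset_univ]
    _ = ∏ i, ∑ t : Bool, h (z i) t := (Finset.prod_univ_sum _ _).symm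
    _ = ∏ i, (h (z i) true + h (z i) false) := by
        apply Finset.prod_congr rfl; intro i _; exact Fintype.sum_bool _

lemma rowsum_one {n : ℕ} {p : ℝ} (z : Fin n → Bool) :
    ∑ y : Fin n → Bool, ∏ i, gw p (z i) (y i) = 1 := by
  rw [sum_pi_prod]
  apply Finset.prod_eq_one
  intro i _
  cases z i <;> simp [gw]

set_option maxHeartbeats 4000000 in
lemma core_bound {n : ℕ} {m δ : ℝ} (hm : 1 < m) (hδpos : 0 < δ) (hδ2 : δ ^ 2 = 1 / (16 * m))
    (ζr : (Fin n → Bool) → ℝ) (hζ0 : ∀ z, 0 ≤ ζr z) (hζ1 : ∑ z, ζr z = 1)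
    (hζk : ∑ z, ζr z * ((Finset.univ.filter fun i => z i = true).card : ℝ) = m)
    (c : (Fin n → Bool) → (Fin n → Bool) → ℝ) :
    1 / (36 * m) ≤
      (∑ x : (Fin n → Bool) × (Fin n → Bool),
        (ζr x.1 * ∏ i, gw (1/2 + δ) (x.1 i) (x.2 i)) * (c x.1 x.2 - (1/2 + δ)) ^ 2)
      + (∑ x : (Fin n → Bool) × (Fin n → Bool),
        (ζr x.1 * ∏ i, gw (1/2 - δ) (x.1 i) (x.2 i)) * (c x.1 x.2 - (1/2 - δ)) ^ 2) := by
  classical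
  have hm0 : (0 : ℝ) < m := lt_trans one_pos hm
  have hδ4 : δ < 1/4 := by
    have hlt : δ ^ 2 < 1/16 := by
      rw [hδ2]
      apply div_lt_div_of_pos_left one_pos (by norm_num) (by linarith)
    nlinarith
  set p : ℝ := 1/2 + δ with hp
  set q : ℝ := 1/2 - δ with hq
  have hp0 : 0 ≤ p := by simp [hp]; linarith
  have hp1 : p ≤ 1 := by simp [hp]; linarith
  have hq0 : 0 ≤ q := by simp [hq]; linarith
  have hq1 : q ≤ 1 := by simp [hq]; linarith
  have hpq0 : 0 < p * q := by
    apply mul_pos <;> [skip; skip] <;> simp [hp, hq] <;> linarith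
  set a : (Fin n → Bool) × (Fin n → Bool) → ℝ :=
    fun x => ζr x.1 * ∏ i, gw p (x.1 i) (x.2 i) with ha
  set b : (Fin n → Bool) × (Fin n → Bool) → ℝ :=
    fun x => ζr x.1 * ∏ i, gw q (x.1 i) (x.2 i) with hb
  have ha0 : ∀ x, 0 ≤ a x := fun x =>
    mul_nonneg (hζ0 _) (Finset.prod_nonneg fun i _ => gw_nonneg hp0 hp1 _ _)
  have hb0 : ∀ x, 0 ≤ b x := fun x =>
    mul_nonneg (hζ0 _) (Finset.prod_nonneg fun i _ => gw_nonneg hq0 hq1 _ _)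
  have hsuma : ∑ x : (Fin n → Bool) × (Fin n → Bool), a x = 1 := by
    rw [Fintype.sum_prod_type]
    calc ∑ z, ∑ y, a (z, y) = ∑ z : Fin n → Bool, ζr z * 1 := by
          apply Finset.sum_congr rfl; intro z _
          simp only [ha, hb]
          rw [← Finset.mul_sum, rowsum_one z]
      _ = 1 := by simp only [mul_one]; exact hζ1
  have hsumb : ∑ x : (Fin n → Bool) × (Fin n → Bool), b x = 1 := by
    rw [Fintype.sum_prod_type]
    calc ∑ z, ∑ y, b (z, y) = ∑ z : Fin n → Bool, ζr z * 1 := by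
          apply Finset.sum_congr rfl; intro z _
          simp only [ha, hb]
          rw [← Finset.mul_sum, rowsum_one z]
      _ = 1 := by simp only [mul_one]; exact hζ1
  -- hellinger affinity
  set hw : Bool → Bool → ℝ :=
    fun zi yi => if zi then Real.sqrt (p * q) else (if yi then 0 else 1) with hhw
  have hw0 : ∀ zi yi, 0 ≤ hw zi yi := by
    intro zi yi; cases zi <;> cases yi <;> simp [hhw, Real.sqrt_nonneg]
  have hab_sqrt : ∀ x, Real.sqrt (a x * b x) = ζr x.1 * ∏ i, hw (x.1 i) (x.2 i) := by
    intro x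
    have hsq : a x * b x = (ζr x.1 * ∏ i, hw (x.1 i) (x.2 i)) ^ 2 := by
      have : ∀ i : Fin n, gw p (x.1 i) (x.2 i) * gw q (x.1 i) (x.2 i)
          = hw (x.1 i) (x.2 i) ^ 2 := by
        intro i
        cases hz : x.1 i <;> cases hy : x.2 i <;>
          simp [gw, hhw, Real.sq_sqrt hpq0.le] <;> ring_nf <;>
          rw [hp, hq] <;> ring
      calc a x * b x = ζr x.1 ^ 2 * ∏ i, (gw p (x.1 i) (x.2 i) * gw q (x.1 i) (x.2 i)) := by
            rw [Finset.prod_mul_distrib]; simp [ha, hb]; ring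
        _ = ζr x.1 ^ 2 * ∏ i, hw (x.1 i) (x.2 i) ^ 2 := by
            congr 1; exact Finset.prod_congr rfl fun i _ => this i
        _ = (ζr x.1 * ∏ i, hw (x.1 i) (x.2 i)) ^ 2 := by
            rw [mul_pow, Finset.prod_pow]
    rw [hsq, Real.sqrt_sq (mul_nonneg (hζ0 _) (Finset.prod_nonneg fun i _ => hw0 _ _))]
  set r : ℝ := 2 * Real.sqrt (p * q) with hr
  have hr0 : 0 < r := by positivity
  have hr2 : r ^ 2 = 1 - 1 / (4 * m) := by
    have : r ^ 2 = 4 * (p * q) := by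
      rw [hr, mul_pow, Real.sq_sqrt hpq0.le]; ring
    rw [this, hp, hq]
    have h4 : (1/2 + δ) * (1/2 - δ) = 1/4 - δ ^ 2 := by ring
    rw [h4, hδ2]
    field_simp
    ring
  set ρ : ℝ := ∑ x : (Fin n → Bool) × (Fin n → Bool), Real.sqrt (a x * b x) with hρ
  have hρ_eq : ρ = ∑ z : Fin n → Bool,
      ζr z * r ^ (Finset.univ.filter fun i => z i = true).card := by
    rw [hρ, Fintype.sum_prod_type]
    apply Finset.sum_congr rfl; intro z _
    calc ∑ y : Fin n → Bool, Real.sqrt (a (z, y) * b (z, y))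
        = ∑ y : Fin n → Bool, ζr z * ∏ i, hw (z i) (y i) := by
          apply Finset.sum_congr rfl; intro y _; exact hab_sqrt (z, y)
      _ = ζr z * ∏ i, (hw (z i) true + hw (z i) false) := by
          rw [← Finset.mul_sum, sum_pi_prod]
      _ = ζr z * ∏ i, (if z i = true then r else 1) := by
          congr 1; apply Finset.prod_congr rfl; intro i _
          cases z i <;> simp [hhw, hr] <;> ring
      _ = ζr z * r ^ (Finset.univ.filter fun i => z i = true).card := by
          rw [Finset.prod_ite, Finset.prod_const, Finset.prod_const, one_pow, mul_one]
  -- lower bound on the affinity ρ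
  have hlogr : -(1 / (6 * m)) ≤ Real.log r := by
    have hs : (0:ℝ) < 1 - 1 / (4 * m) := by
      have : 1 / (4 * m) < 1 := by
        rw [div_lt_one (by linarith)]; linarith
      linarith
    have hlog2 : Real.log (r ^ 2) = 2 * Real.log r := by
      rw [Real.log_pow]; push_cast; ring
    have hstep : -(1 / (3 * m)) ≤ Real.log (1 - 1 / (4 * m)) := by
      have hx : (0:ℝ) < (1 - 1 / (4 * m))⁻¹ := by positivity
      have h1 := Real.log_le_sub_one_of_pos hx
      rw [Real.log_inv] at h1
      have h2 : (1 - 1 / (4 * m))⁻¹ - 1 ≤ 1 / (3 * m) := by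
        rw [inv_eq_one_div, div_sub' (ne_of_gt hs)]
        rw [div_le_div_iff₀ hs (by linarith)]
        have h34 : (3:ℝ)/4 ≤ 1 - 1 / (4 * m) := by
          have : 1 / (4 * m) ≤ 1 / 4 := by
            apply div_le_div_of_nonneg_left (by norm_num) (by norm_num) (by linarith)
          linarith
        have : (1 - (1 - 1 / (4 * m))) * (3 * m) = 3 / 4 := by field_simp; ring
        nlinarith
      linarith
    rw [← hr2] at hstep
    rw [hlog2] at hstep
    have h36 : 1 / (3 * m) = 2 * (1 / (6 * m)) := by
      field_simp; ring
    linarith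
  have hρ_ge : 5 / 6 ≤ ρ := by
    have hpt : ∀ z : Fin n → Bool,
        1 + ((Finset.univ.filter fun i => z i = true).card : ℝ) * Real.log r
          ≤ r ^ (Finset.univ.filter fun i => z i = true).card := by
      intro z
      set k := (Finset.univ.filter fun i => z i = true).card
      have := Real.add_one_le_exp ((k : ℝ) * Real.log r)
      rw [Real.exp_nat_mul, Real.exp_log hr0] at this
      linarith
    have : ∑ z : Fin n → Bool, ζr z * (1 + ((Finset.univ.filter fun i => z i = true).card : ℝ) * Real.log r) ≤ ρ := by
      rw [hρ_eq]
      apply Finset.sum_le_sum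
      intro z _
      exact mul_le_mul_of_nonneg_left (hpt z) (hζ0 z)
    have hexpand : ∑ z : Fin n → Bool, ζr z * (1 + ((Finset.univ.filter fun i => z i = true).card : ℝ) * Real.log r)
        = 1 + m * Real.log r := by
      have : ∀ z : Fin n → Bool, ζr z * (1 + ((Finset.univ.filter fun i => z i = true).card : ℝ) * Real.log r)
          = ζr z + (ζr z * ((Finset.univ.filter fun i => z i = true).card : ℝ)) * Real.log r := by
        intro z; ring
      rw [Finset.sum_congr rfl fun z _ => this z, Finset.sum_add_distrib, hζ1,
        ← Finset.sum_mul, hζk]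
    rw [hexpand] at this
    have h7 : -(1/6 : ℝ) ≤ m * Real.log r := by
      have hmul := mul_le_mul_of_nonneg_left hlogr hm0.le
      have h6 : m * (1 / (6 * m)) = 1/6 := by field_simp
      calc -(1/6 : ℝ) = m * (-(1 / (6 * m))) := by rw [mul_neg, h6]
        _ ≤ m * Real.log r := hmul
    linarith
  have hρ_le : ρ ≤ 1 := by
    have h0 : (0:ℝ) ≤ ∑ x : (Fin n → Bool) × (Fin n → Bool),
        (Real.sqrt (a x) - Real.sqrt (b x)) ^ 2 :=
      Finset.sum_nonneg fun x _ => sq_nonneg _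
    have hexp : ∑ x : (Fin n → Bool) × (Fin n → Bool),
        (Real.sqrt (a x) - Real.sqrt (b x)) ^ 2 = 2 - 2 * ρ := by
      have : ∀ x : (Fin n → Bool) × (Fin n → Bool),
          (Real.sqrt (a x) - Real.sqrt (b x)) ^ 2
            = a x + b x - 2 * Real.sqrt (a x * b x) := by
        intro x
        rw [Real.sqrt_mul (ha0 x)]
        have h1 := Real.sq_sqrt (ha0 x)
        have h2 := Real.sq_sqrt (hb0 x)
        nlinarith [Real.sqrt_nonneg (a x), Real.sqrt_nonneg (b x)]
      rw [Finset.sum_congr rfl fun x _ => this x]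
      rw [Finset.sum_sub_distrib, Finset.sum_add_distrib, hsuma, hsumb, ← Finset.mul_sum, ← hρ]
      ring
    linarith [hexp ▸ h0]
  -- total variation bound via Cauchy–Schwarz
  set T : ℝ := ∑ x : (Fin n → Bool) × (Fin n → Bool), |a x - b x| with hT
  have hT0 : 0 ≤ T := Finset.sum_nonneg fun x _ => abs_nonneg _
  have hTle : T ≤ 7 / 6 := by
    have habs : ∀ x : (Fin n → Bool) × (Fin n → Bool),
        |a x - b x| = |Real.sqrt (a x) - Real.sqrt (b x)| * (Real.sqrt (a x) + Real.sqrt (b x)) := by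
      intro x
      have h1 := Real.sq_sqrt (ha0 x)
      have h2 := Real.sq_sqrt (hb0 x)
      have : a x - b x = (Real.sqrt (a x) - Real.sqrt (b x)) * (Real.sqrt (a x) + Real.sqrt (b x)) := by
        nlinarith
      rw [this, abs_mul, abs_of_nonneg (by positivity : (0:ℝ) ≤ Real.sqrt (a x) + Real.sqrt (b x))]
    have hCS := Finset.sum_mul_sq_le_sq_mul_sq Finset.univ
      (fun x : (Fin n → Bool) × (Fin n → Bool) => |Real.sqrt (a x) - Real.sqrt (b x)|)
      (fun x => Real.sqrt (a x) + Real.sqrt (b x))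
    have hTsq : T ^ 2 ≤
        (∑ x : (Fin n → Bool) × (Fin n → Bool), (Real.sqrt (a x) - Real.sqrt (b x)) ^ 2) *
        (∑ x : (Fin n → Bool) × (Fin n → Bool), (Real.sqrt (a x) + Real.sqrt (b x)) ^ 2) := by
      rw [hT, Finset.sum_congr rfl fun x _ => habs x]
      simpa [sq_abs] using hCS
    have hminus : ∑ x : (Fin n → Bool) × (Fin n → Bool),
        (Real.sqrt (a x) - Real.sqrt (b x)) ^ 2 = 2 - 2 * ρ := by
      have : ∀ x : (Fin n → Bool) × (Fin n → Bool),
          (Real.sqrt (a x) - Real.sqrt (b x)) ^ 2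
            = a x + b x - 2 * Real.sqrt (a x * b x) := by
        intro x
        rw [Real.sqrt_mul (ha0 x)]
        have h1 := Real.sq_sqrt (ha0 x)
        have h2 := Real.sq_sqrt (hb0 x)
        nlinarith [Real.sqrt_nonneg (a x), Real.sqrt_nonneg (b x)]
      rw [Finset.sum_congr rfl fun x _ => this x]
      rw [Finset.sum_sub_distrib, Finset.sum_add_distrib, hsuma, hsumb, ← Finset.mul_sum, ← hρ]
      ring
    have hplus : ∑ x : (Fin n → Bool) × (Fin n → Bool),
        (Real.sqrt (a x) + Real.sqrt (b x)) ^ 2 = 2 + 2 * ρ := by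
      have : ∀ x : (Fin n → Bool) × (Fin n → Bool),
          (Real.sqrt (a x) + Real.sqrt (b x)) ^ 2
            = a x + b x + 2 * Real.sqrt (a x * b x) := by
        intro x
        rw [Real.sqrt_mul (ha0 x)]
        have h1 := Real.sq_sqrt (ha0 x)
        have h2 := Real.sq_sqrt (hb0 x)
        nlinarith [Real.sqrt_nonneg (a x), Real.sqrt_nonneg (b x)]
      rw [Finset.sum_congr rfl fun x _ => this x]
      rw [Finset.sum_add_distrib, Finset.sum_add_distrib, hsuma, hsumb, ← Finset.mul_sum, ← hρ]
      ring
    rw [hminus, hplus] at hTsq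
    nlinarith [hρ_ge, hρ_le, hT0]
  -- sum of pointwise minima
  have hminsum : 5 / 12 ≤ ∑ x : (Fin n → Bool) × (Fin n → Bool), min (a x) (b x) := by
    have hpt : ∀ x : (Fin n → Bool) × (Fin n → Bool),
        (a x + b x) / 2 - |a x - b x| / 2 ≤ min (a x) (b x) := by
      intro x
      rcases le_total (a x) (b x) with h | h
      · rw [min_eq_left h, abs_of_nonpos (by linarith)]; linarith
      · rw [min_eq_right h, abs_of_nonneg (by linarith)]; linarith
    calc (5:ℝ) / 12 ≤ 1 - T / 2 := by linarith
      _ = ∑ x : (Fin n → Bool) × (Fin n → Bool), ((a x + b x) / 2 - |a x - b x| / 2) := by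
          rw [Finset.sum_sub_distrib]
          have h1 : ∑ x : (Fin n → Bool) × (Fin n → Bool), (a x + b x) / 2 = 1 := by
            rw [← Finset.sum_div, Finset.sum_add_distrib, hsuma, hsumb]; norm_num
          have h2 : ∑ x : (Fin n → Bool) × (Fin n → Bool), |a x - b x| / 2 = T / 2 := by
            rw [← Finset.sum_div, ← hT]
          rw [h1, h2]
      _ ≤ _ := Finset.sum_le_sum fun x _ => hpt x
  -- pointwise two-point risk bound and conclusion
  have hfinal : ∀ x : (Fin n → Bool) × (Fin n → Bool),
      min (a x) (b x) * (2 * δ ^ 2) ≤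
        a x * (c x.1 x.2 - p) ^ 2 + b x * (c x.1 x.2 - q) ^ 2 := by
    intro x
    have hsq : 2 * δ ^ 2 ≤ (c x.1 x.2 - p) ^ 2 + (c x.1 x.2 - q) ^ 2 := by
      rw [hp, hq]; nlinarith [sq_nonneg (c x.1 x.2 - 1/2)]
    have h1 : min (a x) (b x) * (c x.1 x.2 - p) ^ 2 ≤ a x * (c x.1 x.2 - p) ^ 2 :=
      mul_le_mul_of_nonneg_right (min_le_left _ _) (sq_nonneg _)
    have h2 : min (a x) (b x) * (c x.1 x.2 - q) ^ 2 ≤ b x * (c x.1 x.2 - q) ^ 2 :=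
      mul_le_mul_of_nonneg_right (min_le_right _ _) (sq_nonneg _)
    have hmin0 : 0 ≤ min (a x) (b x) := le_min (ha0 x) (hb0 x)
    have h3 := mul_le_mul_of_nonneg_left hsq hmin0
    rw [mul_add] at h3
    linarith
  have hsum_final : (5 / 12 : ℝ) * (2 * δ ^ 2) ≤
      (∑ x : (Fin n → Bool) × (Fin n → Bool), a x * (c x.1 x.2 - p) ^ 2)
      + (∑ x : (Fin n → Bool) × (Fin n → Bool), b x * (c x.1 x.2 - q) ^ 2) := by
    calc (5 / 12 : ℝ) * (2 * δ ^ 2)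
        ≤ (∑ x : (Fin n → Bool) × (Fin n → Bool), min (a x) (b x)) * (2 * δ ^ 2) := by
          apply mul_le_mul_of_nonneg_right hminsum (by positivity)
      _ = ∑ x : (Fin n → Bool) × (Fin n → Bool), min (a x) (b x) * (2 * δ ^ 2) := by
          rw [Finset.sum_mul]
      _ ≤ ∑ x : (Fin n → Bool) × (Fin n → Bool),
            (a x * (c x.1 x.2 - p) ^ 2 + b x * (c x.1 x.2 - q) ^ 2) :=
          Finset.sum_le_sum fun x _ => hfinal x
      _ = _ := Finset.sum_add_distrib
  have harith : 1 / (36 * m) ≤ (5 / 12 : ℝ) * (2 * δ ^ 2) := by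
    rw [hδ2]
    rw [div_le_iff₀ (by linarith : (0:ℝ) < 36 * m)]
    have : (5 / 12 : ℝ) * (2 * (1 / (16 * m))) * (36 * m) = 30 / 16 := by
      field_simp; ring
    rw [this]; norm_num
  exact le_trans harith hsum_final

/-- Bernoulli measure on `Bool`. -/
noncomputable def bmeas (p : ℝ) : Measure Bool :=
  (ENNReal.ofReal p) • Measure.dirac true + (ENNReal.ofReal (1 - p)) • Measure.dirac false

lemma bmeas_singleton (p : ℝ) (t : Bool) :
    bmeas p {t} = ENNReal.ofReal (if t then p else 1 - p) := by
  cases t <;> simp [bmeas, Measure.dirac_apply]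

lemma bmeas_isProb {p : ℝ} (h0 : 0 ≤ p) (h1 : p ≤ 1) : IsProbabilityMeasure (bmeas p) := by
  constructor
  simp [bmeas]
  rw [← ENNReal.ofReal_add h0 (by linarith)]
  norm_num

/-- embedding of a Bernoulli outcome as a potential-outcome pair. -/
def φb (t : Bool) : ℝ × ℝ := (0, if t then 1 else 0)

lemma φb_measurable : Measurable φb := measurable_of_countable _

/-- the two-point potential-outcome distribution. -/
noncomputable def νp (p : ℝ) : Measure (ℝ × ℝ) := (bmeas p).map φb

lemma νp_isProb {p : ℝ} (h0 : 0 ≤ p) (h1 : p ≤ 1) : IsProbabilityMeasure (νp p) := by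
  haveI := bmeas_isProb h0 h1
  exact Measure.isProbabilityMeasure_map φb_measurable.aemeasurable

lemma νp_support {p : ℝ} (h0 : 0 ≤ p) (h1 : p ≤ 1) :
    ∀ᵐ y ∂(νp p), y ∈ Set.Icc (0:ℝ) 1 ×ˢ Set.Icc (0:ℝ) 1 := by
  have hS : MeasurableSet (Set.Icc (0:ℝ) 1 ×ˢ Set.Icc (0:ℝ) 1) :=
    measurableSet_Icc.prod measurableSet_Icc
  rw [ae_iff, νp]
  rw [show {y : ℝ × ℝ | ¬ y ∈ Set.Icc (0:ℝ) 1 ×ˢ Set.Icc (0:ℝ) 1}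
      = (Set.Icc (0:ℝ) 1 ×ˢ Set.Icc (0:ℝ) 1)ᶜ from rfl]
  rw [Measure.map_apply φb_measurable hS.compl]
  have hpre : φb ⁻¹' ((Set.Icc (0:ℝ) 1 ×ˢ Set.Icc (0:ℝ) 1)ᶜ) = ∅ := by
    ext t
    simp only [Set.mem_preimage, Set.mem_compl_iff, Set.mem_empty_iff_false, iff_false, not_not]
    cases t <;> constructor <;> simp [φb] <;> norm_num
  rw [hpre, measure_empty]

lemma νp_mean {p : ℝ} (h0 : 0 ≤ p) (h1 : p ≤ 1) :
    ∫ y, (y.2 - y.1) ∂(νp p) = p := by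
  haveI := bmeas_isProb h0 h1
  rw [νp, integral_map (f := fun y : ℝ × ℝ => y.2 - y.1) φb_measurable.aemeasurable
    (continuous_snd.sub continuous_fst).aestronglyMeasurable]
  rw [integral_fintype (by exact Integrable.of_finite)]
  simp [φb, bmeas_singleton, ENNReal.toReal_ofReal h0, measureReal_def]

instance bmeas_finite (p : ℝ) : IsFiniteMeasure (bmeas p) := by
  constructor
  have : (bmeas p) Set.univ = ENNReal.ofReal p + ENNReal.ofReal (1 - p) := by
    simp [bmeas]
  rw [this]
  exact ENNReal.add_lt_top.2 ⟨ENNReal.ofReal_lt_top, ENNReal.ofReal_lt_top⟩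

/-- coordinate measures of the observed (masked) outcomes given assignment `z`. -/
noncomputable def bm' {n : ℕ} (p : ℝ) (z : Fin n → Bool) (i : Fin n) : Measure Bool :=
  if z i then bmeas p else Measure.dirac false

instance bm'_sigmaFinite {n : ℕ} (p : ℝ) (z : Fin n → Bool) (i : Fin n) :
    SigmaFinite (bm' p z i) := by
  unfold bm'; split_ifs <;> infer_instance

lemma bm'_prob {n : ℕ} {p : ℝ} (h0 : 0 ≤ p) (h1 : p ≤ 1) (z : Fin n → Bool) (i : Fin n) :
    IsProbabilityMeasure (bm' p z i) := by
  unfold bm'; split_ifs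
  · exact bmeas_isProb h0 h1
  · infer_instance

lemma mask_preserving {n : ℕ} {p : ℝ} (h0 : 0 ≤ p) (h1 : p ≤ 1) (z : Fin n → Bool) :
    MeasurePreserving (fun (b : Fin n → Bool) (i : Fin n) => z i && b i)
      (Measure.pi fun _ => bmeas p)
      (Measure.pi (bm' p z)) := by
  haveI := bmeas_isProb h0 h1
  apply measurePreserving_pi
  intro i
  unfold bm'
  cases hz : z i
  · simp only [hz, Bool.false_and, Bool.false_eq_true, if_false]
    refine ⟨measurable_const, ?_⟩
    have hconst : (false.and) = fun _ : Bool => false := by funext t; simp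
    rw [hconst, Measure.map_const, measure_univ, one_smul]
  · simp only [hz, Bool.true_and, if_true]
    exact ⟨measurable_id, Measure.map_id⟩

lemma pi_mask_singleton {n : ℕ} {p : ℝ} (h0 : 0 ≤ p) (h1 : p ≤ 1) (z y : Fin n → Bool) :
    (Measure.pi (bm' p z)) {y}
      = ENNReal.ofReal (∏ i, gw p (z i) (y i)) := by
  rw [← Set.univ_pi_singleton y, Measure.pi_pi]
  have : ∀ i : Fin n, bm' p z i {y i} = ENNReal.ofReal (gw p (z i) (y i)) := by
    intro i
    unfold bm'
    cases hz : z i <;> cases hy : y i <;>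
      simp [bmeas_singleton, gw, Measure.dirac_apply]
  rw [Finset.prod_congr rfl fun i _ => this i]
  rw [← ENNReal.ofReal_prod_of_nonneg]
  intro i _
  cases z i <;> cases y i <;> simp [gw] <;> linarith

set_option maxHeartbeats 1000000 in
lemma A_eq {n : ℕ} {p : ℝ} (h0 : 0 ≤ p) (h1 : p ≤ 1)
    (ζ : Measure (Fin n → Bool)) [IsProbabilityMeasure ζ]
    (ψhat : (Fin n → Bool) × (Fin n → ℝ) → ℝ) (hψ : Measurable ψhat) :
    ∫⁻ ω, ENNReal.ofReal
        ((ψhat (ω.1, fun i => if ω.1 i then (ω.2 i).2 else (ω.2 i).1) - p) ^ 2)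
        ∂(ζ.prod (Measure.pi fun _ : Fin n => νp p))
      = ENNReal.ofReal (∑ x : (Fin n → Bool) × (Fin n → Bool),
          ((ζ {x.1}).toReal * ∏ i, gw p (x.1 i) (x.2 i)) *
            (ψhat (x.1, fun i => if x.2 i then (1:ℝ) else 0) - p) ^ 2) := by
  haveI := bmeas_isProb h0 h1
  haveI := νp_isProb h0 h1
  have hΦmeas : Measurable fun (b : Fin n → Bool) (i : Fin n) => φb (b i) :=
    measurable_of_countable _
  have hprod : ζ.prod (Measure.pi fun _ : Fin n => νp p)
      = Measure.map (Prod.map id fun (b : Fin n → Bool) (i : Fin n) => φb (b i))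
          (ζ.prod (Measure.pi fun _ : Fin n => bmeas p)) :=
    ((MeasurePreserving.id ζ).prod
      (measurePreserving_pi _ _ fun _ => ⟨φb_measurable, rfl⟩)).map_eq.symm
  rw [hprod]
  have hF : Measurable fun ω : (Fin n → Bool) × (Fin n → ℝ × ℝ) =>
      ENNReal.ofReal ((ψhat (ω.1, fun i => if ω.1 i then (ω.2 i).2 else (ω.2 i).1) - p) ^ 2) := by
    apply ENNReal.measurable_ofReal.comp
    apply Measurable.pow_const
    apply Measurable.sub _ measurable_const
    apply hψ.comp
    apply measurable_fst.prodMk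
    apply measurable_pi_lambda
    intro i
    have hc : Measurable fun ω : (Fin n → Bool) × (Fin n → ℝ × ℝ) => ω.1 i :=
      (measurable_pi_apply i).comp measurable_fst
    have hs : MeasurableSet {ω : (Fin n → Bool) × (Fin n → ℝ × ℝ) | ω.1 i = true} :=
      hc (measurableSet_singleton true)
    exact Measurable.ite hs
      (measurable_snd.comp ((measurable_pi_apply i).comp measurable_snd))
      (measurable_fst.comp ((measurable_pi_apply i).comp measurable_snd))
  rw [lintegral_map hF (measurable_of_countable _)]
  have hobs : ∀ (x : (Fin n → Bool) × (Fin n → Bool)),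
      (fun i => if x.1 i then (φb (x.2 i)).2 else (φb (x.2 i)).1)
        = fun i => if (x.1 i && x.2 i) then (1:ℝ) else 0 := by
    intro x; funext i
    cases hz : x.1 i <;> cases hb : x.2 i <;> simp [φb]
  simp only [Prod.map_fst, Prod.map_snd, id_eq]
  have hstep : ∀ x : (Fin n → Bool) × (Fin n → Bool),
      ENNReal.ofReal ((ψhat (x.1,
          fun i => if x.1 i then (φb (x.2 i)).2 else (φb (x.2 i)).1) - p) ^ 2)
        = ENNReal.ofReal ((ψhat (x.1,
          fun i => if (x.1 i && x.2 i) then (1:ℝ) else 0) - p) ^ 2) := by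
    intro x; rw [hobs x]
  rw [lintegral_congr hstep]
  rw [lintegral_prod _ (measurable_of_countable _).aemeasurable]
  have hinner : ∀ z : Fin n → Bool,
      (∫⁻ b, ENNReal.ofReal ((ψhat (z, fun i => if (z i && b i) then (1:ℝ) else 0) - p) ^ 2)
          ∂(Measure.pi fun _ : Fin n => bmeas p))
      = ∑ y : Fin n → Bool,
          ENNReal.ofReal ((ψhat (z, fun i => if y i then (1:ℝ) else 0) - p) ^ 2)
            * ENNReal.ofReal (∏ i, gw p (z i) (y i)) := by
    intro z
    have hmp := (mask_preserving h0 h1 z).lintegral_comp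
      (f := fun y : Fin n → Bool =>
        ENNReal.ofReal ((ψhat (z, fun i => if y i then (1:ℝ) else 0) - p) ^ 2))
      (measurable_of_countable _)
    rw [show (fun b : Fin n → Bool =>
        ENNReal.ofReal ((ψhat (z, fun i => if (z i && b i) then (1:ℝ) else 0) - p) ^ 2))
      = fun b : Fin n → Bool =>
        ENNReal.ofReal ((ψhat (z, fun i =>
          if (fun (b : Fin n → Bool) (i : Fin n) => z i && b i) b i then (1:ℝ) else 0) - p) ^ 2)
      from rfl]
    rw [hmp]
    rw [lintegral_fintype]
    congr 1
    funext y
    rw [pi_mask_singleton h0 h1]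
  rw [lintegral_congr fun z => hinner z]
  rw [lintegral_fintype]
  rw [Fintype.sum_prod_type]
  rw [ENNReal.ofReal_sum_of_nonneg (fun z _ => Finset.sum_nonneg fun y _ =>
    mul_nonneg (mul_nonneg ENNReal.toReal_nonneg
      (Finset.prod_nonneg fun i _ => gw_nonneg h0 h1 _ _)) (sq_nonneg _))]
  apply Finset.sum_congr rfl
  intro z _
  rw [ENNReal.ofReal_sum_of_nonneg (fun y _ =>
    mul_nonneg (mul_nonneg ENNReal.toReal_nonneg
      (Finset.prod_nonneg fun i _ => gw_nonneg h0 h1 _ _)) (sq_nonneg _))]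
  rw [show ζ {z} = ENNReal.ofReal (ζ {z}).toReal from
    (ENNReal.ofReal_toReal (measure_ne_top ζ _)).symm]
  rw [Finset.sum_mul]
  apply Finset.sum_congr rfl
  intro y _
  rw [← ENNReal.ofReal_mul (sq_nonneg _),
    ← ENNReal.ofReal_mul (mul_nonneg (sq_nonneg _)
      (Finset.prod_nonneg fun i _ => gw_nonneg h0 h1 _ _))]
  congr 1
  ring

lemma sum_sing {n : ℕ} (μ : Measure (Fin n → Bool)) [IsProbabilityMeasure μ] :
    ∑ x : (Fin n → Bool), μ {x} = 1 := by
  rw [← measure_univ (μ := μ), ← MeasureTheory.measure_biUnion_finset]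
  · congr 1; simp [Set.eq_univ_iff_forall]
  · intro a _ b _ hab
    simp [Set.disjoint_iff_inter_eq_empty, Set.singleton_inter_eq_empty, hab]
  · intros; exact measurableSet_singleton _

/-- Minimax lower bound in the i.i.d. observation model: for any design `ζ`
over treatment assignments with expected number of treated units `nπ` and any
(measurable) estimator `ψ̂` of the population average treatment effect from the
observed data `(Z, (Y_i(Z_i))_i)`, there exists an i.i.d. potential-outcome
distribution `ν` on `[0,1]²` for which the mean squared error is at least
`1/(72nπ)`, i.e. the RMSE is at least `1/√(72nπ)`. -/
theorem minimax_lower_bound_iid (n : ℕ) (π : ℝ) (hπ : 0 < π) (hπ1 : π ≤ 1)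
    (hnπ : 1 < n * π)
    (ζ : Measure (Fin n → Bool)) [IsProbabilityMeasure ζ]
    (hdesign : ∫ z, ((Finset.univ.filter fun i => z i = true).card : ℝ) ∂ζ
      = n * π)
    (ψhat : (Fin n → Bool) × (Fin n → ℝ) → ℝ) (hψ : Measurable ψhat) :
    ∃ ν : Measure (ℝ × ℝ), IsProbabilityMeasure ν ∧
      (∀ᵐ y ∂ν, y ∈ Set.Icc (0:ℝ) 1 ×ˢ Set.Icc (0:ℝ) 1) ∧
      ENNReal.ofReal (1 / (72 * n * π)) ≤
        ∫⁻ ω, ENNReal.ofReal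
          ((ψhat (ω.1, fun i => if ω.1 i then (ω.2 i).2 else (ω.2 i).1)
            - ∫ y, (y.2 - y.1) ∂ν)^2)
          ∂(ζ.prod (Measure.pi fun _ : Fin n => ν)) := by
  set m : ℝ := (n : ℝ) * π with hmdef
  have hm : 1 < m := hnπ
  have hm0 : 0 < m := lt_trans one_pos hm
  have hsqm : 0 < Real.sqrt m := Real.sqrt_pos.mpr hm0
  set δ : ℝ := 1 / (4 * Real.sqrt m) with hδdef
  have hδpos : 0 < δ := by positivity
  have hδ2 : δ ^ 2 = 1 / (16 * m) := by
    rw [hδdef, div_pow, one_pow, mul_pow, Real.sq_sqrt hm0.le]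
    norm_num
  have hδ4 : δ < 1/4 := by
    have hlt : δ ^ 2 < 1/16 := by
      rw [hδ2]
      apply div_lt_div_of_pos_left one_pos (by norm_num) (by linarith)
    nlinarith
  have hp0 : (0:ℝ) ≤ 1/2 + δ := by linarith
  have hp1 : (1:ℝ)/2 + δ ≤ 1 := by linarith
  have hq0 : (0:ℝ) ≤ 1/2 - δ := by linarith
  have hq1 : (1:ℝ)/2 - δ ≤ 1 := by linarith
  set ζr : (Fin n → Bool) → ℝ := fun z => (ζ {z}).toReal with hζrdef
  have hζ0 : ∀ z, 0 ≤ ζr z := fun z => ENNReal.toReal_nonneg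
  have hζ1 : ∑ z, ζr z = 1 := by
    rw [hζrdef]
    rw [← ENNReal.toReal_sum (fun z _ => measure_ne_top ζ _)]
    rw [sum_sing ζ, ENNReal.toReal_one]
  have hζk : ∑ z, ζr z * ((Finset.univ.filter fun i => z i = true).card : ℝ) = m := by
    rw [integral_fintype Integrable.of_finite] at hdesign
    simp only [smul_eq_mul] at hdesign
    exact hdesign
  set c : (Fin n → Bool) → (Fin n → Bool) → ℝ :=
    fun z y => ψhat (z, fun i => if y i then (1:ℝ) else 0) with hcdef
  have hcore := core_bound hm hδpos hδ2 ζr hζ0 hζ1 hζk c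
  have h72 : 1 / (36 * m) = 2 * (1 / (72 * m)) := by
    field_simp; ring
  have hchoice : (1 / (72 * m) ≤
        ∑ x : (Fin n → Bool) × (Fin n → Bool),
          (ζr x.1 * ∏ i, gw (1/2 + δ) (x.1 i) (x.2 i)) * (c x.1 x.2 - (1/2 + δ)) ^ 2)
      ∨ (1 / (72 * m) ≤
        ∑ x : (Fin n → Bool) × (Fin n → Bool),
          (ζr x.1 * ∏ i, gw (1/2 - δ) (x.1 i) (x.2 i)) * (c x.1 x.2 - (1/2 - δ)) ^ 2) := by
    by_contra hcon
    push_neg at hcon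
    rw [h72] at hcore
    linarith [hcon.1, hcon.2]
  have hgoal72 : (1:ℝ) / (72 * n * π) = 1 / (72 * m) := by
    rw [hmdef]; ring_nf
  rcases hchoice with h | h
  · refine ⟨νp (1/2 + δ), νp_isProb hp0 hp1, νp_support hp0 hp1, ?_⟩
    rw [νp_mean hp0 hp1]
    rw [A_eq hp0 hp1 ζ ψhat hψ]
    apply ENNReal.ofReal_le_ofReal
    rw [hgoal72]
    exact h
  · refine ⟨νp (1/2 - δ), νp_isProb hq0 hq1, νp_support hq0 hq1, ?_⟩
    rw [νp_mean hq0 hq1]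
    rw [A_eq hq0 hq1 ζ ψhat hψ]
    apply ENNReal.ofReal_le_ofReal
    rw [hgoal72]
    exact h
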